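/- Let G=(V,E) be a finite connected simple graph of diameter D and (X_t)_{t≥0} the 3-color CCA trajectory of an initial 3-coloring X_0 : V → ℤ/3ℤ. If dX_0 is irrotational, then X_t(x) = X_t(y) for all vertices x, y ∈ V and all times t ≥ D. -/

import Mathlib

noncomputable section
attribute [local instance] Classical.propDecidable

open Filter

variable {V : Type*}

/-- Unique representative in `{-1,0,1}` of an element of `ℤ/3ℤ`. -/
def ZMod.repInt (a : ZMod 3) : ℤ := if a = 0 then 0 else if a = 1 then 1 else -1

/-- One step of the 3-color cyclic cellular automaton. -/
def ccaStep (G : SimpleGraph V) (X : V → ZMod 3) : V → ZMod 3 :=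
  fun v => if ∃ u, G.Adj v u ∧ X u = X v + 1 then X v + 1 else X v

/-- The CCA trajectory started from `X₀`. -/
def ccaTraj (G : SimpleGraph V) (X₀ : V → ZMod 3) : ℕ → V → ZMod 3 :=
  fun t => (ccaStep G)^[t] X₀

/-- A vertex is excited at time `t` for CCA iff its color advances. -/
def ccaExcited (G : SimpleGraph V) (X₀ : V → ZMod 3) (t : ℕ) (v : V) : Prop :=
  ccaTraj G X₀ (t + 1) v = ccaTraj G X₀ t v + 1

/-- Number of excitations of `x` at times `0, …, t-1` (CCA). -/
def ccaNe (G : SimpleGraph V) (X₀ : V → ZMod 3) (t : ℕ) (x : V) : ℕ :=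
  ((Finset.range t).filter fun s => ccaExcited G X₀ s x).card

/-- The CCA 1-form `dX` on ordered pairs of vertices. -/
def dXcca (X : V → ZMod 3) (u v : V) : ℤ := (X v - X u).repInt

/-- Path integral of the CCA 1-form along a walk. -/
def walkIntCCA {G : SimpleGraph V} (X : V → ZMod 3) {x y : V} (w : G.Walk x y) : ℤ :=
  (w.darts.map fun d => dXcca X d.toProd.1 d.toProd.2).sum

open SimpleGraph Walk

lemma repInt_neg (a : ZMod 3) : (-a).repInt = - a.repInt := by revert a; decide

lemma repInt_cast (a : ZMod 3) : ((a.repInt : ℤ) : ZMod 3) = a := by revert a; decide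

lemma repInt_range (a : ZMod 3) : a.repInt = -1 ∨ a.repInt = 0 ∨ a.repInt = 1 := by
  revert a; decide

lemma dX_antisymm (X : V → ZMod 3) (u v : V) : dXcca X u v = - dXcca X v u := by
  unfold dXcca; rw [← repInt_neg, neg_sub]

lemma walkInt_nil {G : SimpleGraph V} (X : V → ZMod 3) (v : V) :
    walkIntCCA X (Walk.nil : G.Walk v v) = 0 := rfl

lemma walkInt_cons {G : SimpleGraph V} (X : V → ZMod 3) {u v w : V} (h : G.Adj u v)
    (p : G.Walk v w) : walkIntCCA X (Walk.cons h p) = dXcca X u v + walkIntCCA X p := by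
  simp [walkIntCCA]

lemma walkInt_append {G : SimpleGraph V} (X : V → ZMod 3) {u v w : V}
    (p : G.Walk u v) (q : G.Walk v w) :
    walkIntCCA X (p.append q) = walkIntCCA X p + walkIntCCA X q := by
  simp [walkIntCCA, darts_append]

lemma walkInt_reverse {G : SimpleGraph V} (X : V → ZMod 3) {u v : V} (p : G.Walk u v) :
    walkIntCCA X p.reverse = - walkIntCCA X p := by
  induction p with
  | nil => simp [walkInt_nil]
  | cons h q ih =>
    rw [Walk.reverse_cons, walkInt_append, ih, walkInt_cons, walkInt_cons, walkInt_nil]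
    rw [dX_antisymm]
    ring

lemma walkInt_cast {G : SimpleGraph V} (X : V → ZMod 3) {a b : V} (p : G.Walk a b) :
    X b = X a + ((walkIntCCA X p : ℤ) : ZMod 3) := by
  induction p with
  | nil => simp [walkInt_nil]
  | cons h q ih =>
    rename_i c d e
    rw [walkInt_cons]
    push_cast
    unfold dXcca
    rw [repInt_cast, ih]
    ring

lemma walkInt_closed {G : SimpleGraph V} (X : V → ZMod 3)
    (hirr : ∀ (v : V) (c : G.Walk v v), c.IsCycle → walkIntCCA X c = 0) :
    ∀ (n : ℕ) (v : V) (c : G.Walk v v), c.length = n → walkIntCCA X c = 0 := by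
  classical
  intro n
  induction n using Nat.strong_induction_on with
  | _ n IH =>
  intro v c hlen
  by_cases hdup : c.support.tail.Nodup
  · -- no repeated vertex except endpoints
    cases c with
    | nil => exact walkInt_nil X v
    | cons hadj p =>
      rename_i u
      simp only [Walk.support_cons, List.tail_cons] at hdup
      have hpath : p.IsPath := (Walk.isPath_def p).mpr hdup
      by_cases hedge : s(v, u) ∈ p.edges
      · cases p with
        | nil => exact absurd hadj (G.irrefl)
        | cons h2 q =>
          rename_i w
          simp only [Walk.edges_cons, List.mem_cons] at hedge
          simp only [Walk.support_cons, List.nodup_cons] at hdup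
          rcases hedge with heq | hmem
          · rw [Sym2.eq_iff] at heq
            rcases heq with ⟨hvu, huw⟩ | ⟨hvw, _⟩
            · exact absurd hvu hadj.ne
            · subst hvw
              cases q with
              | nil =>
                rw [walkInt_cons, walkInt_cons, walkInt_nil, dX_antisymm]
                ring
              | cons h3 r =>
                exfalso
                simp only [Walk.support_cons, List.nodup_cons] at hdup
                exact hdup.2.1 (r.end_mem_support)
          · exact absurd (q.snd_mem_support_of_mem_edges hmem) hdup.1
      · have hcyc : (Walk.cons hadj p).IsCycle :=
          (Walk.cons_isCycle_iff p hadj).mpr ⟨hpath, hedge⟩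
        exact hirr v _ hcyc
  · -- a vertex repeats in the interior: split the walk
    obtain ⟨x, hx⟩ := List.exists_duplicate_iff_not_nodup.mpr hdup
    have hxcount : 2 ≤ c.support.tail.count x := List.duplicate_iff_two_le_count.mp hx
    have hxs : x ∈ c.support := List.mem_of_mem_tail hx.mem
    set c' := c.rotate x hxs with hc'
    have hperm : (c'.darts).Perm c.darts := (Walk.rotate_darts c x hxs).perm
    have hint : walkIntCCA X c' = walkIntCCA X c := by
      unfold walkIntCCA
      exact List.Perm.sum_eq (hperm.map _)
    have hlen' : c'.length = n := by
      rw [← hlen, ← Walk.length_darts, ← Walk.length_darts]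
      exact hperm.length_eq
    have hcount' : 2 ≤ c'.support.tail.count x :=
      hxcount.trans_eq ((Walk.support_rotate c x hxs).perm.count_eq x).symm
    have hn1 : 1 ≤ n := by
      by_contra h
      have h0 : c.length = 0 := by omega
      have : c.Nil := Walk.nil_iff_length_eq.mpr h0
      cases c with
      | nil => simp at hxcount
      | cons _ _ => simp at this
    have hnotnil : ¬ c'.Nil := by
      rw [Walk.nil_iff_length_eq, hlen']; omega
    obtain ⟨u, hadj, p, hp⟩ := Walk.not_nil_iff.mp hnotnil
    have hxp : x ∈ p.support := p.end_mem_support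
    have hps : 2 ≤ p.support.count x := by
      have hts : c'.support.tail = p.support := by rw [hp]; simp
      rwa [hts] at hcount'
    set t := p.takeUntil x hxp with ht
    set d := p.dropUntil x hxp with hd
    have hspec : t.append d = p := p.take_spec hxp
    have hctone : t.support.count x = 1 := p.count_support_takeUntil_eq_one hxp
    have hsupp : p.support = t.support ++ d.support.tail := by
      rw [← hspec, Walk.support_append]
    have hdtail : 1 ≤ d.support.tail.count x := by
      rw [hsupp, List.count_append, hctone] at hps; omega
    have hdne : d.support.tail ≠ [] := by
      intro h; rw [h] at hdtail; simp at hdtail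
    have hdlen : 1 ≤ d.length := by
      have h1 : d.support.length = d.length + 1 := d.length_support
      have h2 : 0 < d.support.tail.length := List.length_pos_iff.mpr hdne
      cases hsd : d.support with
      | nil => exact absurd hsd d.support_ne_nil
      | cons a l =>
        rw [hsd] at h1 h2
        simp at h1 h2
        omega
    have hlensum : t.length + d.length = p.length := by
      rw [← hspec, Walk.length_append]
    have hplen : p.length + 1 = n := by
      rw [← hlen', hp, Walk.length_cons]
    have hIt : walkIntCCA X (Walk.cons hadj t) = 0 := by
      apply IH (t.length + 1) (by omega) x
      rw [Walk.length_cons]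
    have hId : walkIntCCA X d = 0 := by
      apply IH d.length (by omega) x d rfl
    have hz : walkIntCCA X c' = 0 := by
      rw [hp, ← hspec, walkInt_cons, walkInt_append, hId]
      rw [walkInt_cons] at hIt
      omega
    rw [← hint, hz]

lemma ccaTraj_succ (G : SimpleGraph V) (X₀ : V → ZMod 3) (t : ℕ) (v : V) :
    ccaTraj G X₀ (t + 1) v = ccaStep G (ccaTraj G X₀ t) v := by
  show (ccaStep G)^[t + 1] X₀ v = _
  rw [Function.iterate_succ_apply']
  rfl

lemma excited_iff (G : SimpleGraph V) (X₀ : V → ZMod 3) (t : ℕ) (v : V) :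
    ccaExcited G X₀ t v ↔ ∃ u, G.Adj v u ∧ ccaTraj G X₀ t u = ccaTraj G X₀ t v + 1 := by
  unfold ccaExcited
  rw [ccaTraj_succ]
  unfold ccaStep
  constructor
  · intro h
    by_contra hn
    rw [if_neg hn] at h
    exact one_ne_zero (left_eq_add.mp h)
  · intro h
    rw [if_pos h]

lemma traj_not_excited (G : SimpleGraph V) (X₀ : V → ZMod 3) (t : ℕ) (v : V)
    (h : ¬ ccaExcited G X₀ t v) : ccaTraj G X₀ (t + 1) v = ccaTraj G X₀ t v := by
  rw [ccaTraj_succ]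
  unfold ccaStep
  rw [if_neg]
  intro hc
  apply h
  unfold ccaExcited
  rw [ccaTraj_succ]
  unfold ccaStep
  rw [if_pos hc]

lemma ccaNe_zero (G : SimpleGraph V) (X₀ : V → ZMod 3) (v : V) : ccaNe G X₀ 0 v = 0 := by
  simp [ccaNe]

lemma ccaNe_succ (G : SimpleGraph V) (X₀ : V → ZMod 3) (t : ℕ) (v : V) :
    ccaNe G X₀ (t + 1) v = ccaNe G X₀ t v + (if ccaExcited G X₀ t v then 1 else 0) := by
  unfold ccaNe
  rw [Finset.range_add_one, Finset.filter_insert]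
  split
  · rw [Finset.card_insert_of_notMem (fun hc => Finset.notMem_range_self (Finset.mem_filter.mp hc).1)]
  · rw [Nat.add_zero]

lemma traj_eq (G : SimpleGraph V) (X₀ : V → ZMod 3) (t : ℕ) (v : V) :
    ccaTraj G X₀ t v = X₀ v + ((ccaNe G X₀ t v : ℕ) : ZMod 3) := by
  induction t with
  | zero => simp [ccaTraj, ccaNe_zero]
  | succ t ih =>
    rw [ccaNe_succ]
    by_cases h : ccaExcited G X₀ t v
    · rw [h, ih, if_pos h]
      push_cast
      ring
    · rw [traj_not_excited G X₀ t v h, ih, if_neg h, Nat.add_zero]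

/-- On a finite connected graph of diameter `D`, if `dX₀` is irrotational then all
vertices share the same color at every time `t ≥ D`. -/
theorem cca_irrotational_synchronizes_by_diameter [Fintype V] (G : SimpleGraph V)
    (hconn : G.Connected) (X₀ : V → ZMod 3)
    (hirr : ∀ (v : V) (c : G.Walk v v), c.IsCycle → walkIntCCA X₀ c = 0) :
    ∀ (t : ℕ), G.diam ≤ t → ∀ x y : V, ccaTraj G X₀ t x = ccaTraj G X₀ t y := by
  classical
  have hne : Nonempty V := hconn.nonempty
  obtain ⟨r⟩ := hne
  set h0 : V → ℤ := fun v => walkIntCCA X₀ (hconn.preconnected r v).some with hh0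
  have hclosed : ∀ (a : V) (c : G.Walk a a), walkIntCCA X₀ c = 0 :=
    fun a c => walkInt_closed X₀ hirr c.length a c rfl
  have hindep : ∀ (a b : V) (p : G.Walk a b), walkIntCCA X₀ p = h0 b - h0 a := by
    intro a b p
    have h := hclosed r
      (((hconn.preconnected r a).some.append p).append ((hconn.preconnected r b).some.reverse))
    rw [walkInt_append, walkInt_append, walkInt_reverse] at h
    simp only [hh0] at *
    omega
  have hedge : ∀ a b : V, G.Adj a b → h0 b = h0 a + dXcca X₀ a b := by
    intro a b hab
    have h := hindep a b (Walk.cons hab Walk.nil)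
    rw [walkInt_cons, walkInt_nil] at h
    omega
  have hedge3 : ∀ a b : V, G.Adj a b →
      h0 b - h0 a = -1 ∨ h0 b - h0 a = 0 ∨ h0 b - h0 a = 1 := by
    intro a b hab
    rw [hedge a b hab]
    have := repInt_range (X₀ b - X₀ a)
    unfold dXcca
    omega
  have hX0 : ∀ v : V, X₀ v = X₀ r + ((h0 v : ℤ) : ZMod 3) := fun v =>
    walkInt_cast X₀ (hconn.preconnected r v).some
  set H : ℕ → V → ℤ := fun t v => h0 v + (ccaNe G X₀ t v : ℤ) with hH
  have hHcast : ∀ (t : ℕ) (v : V), ccaTraj G X₀ t v = X₀ r + ((H t v : ℤ) : ZMod 3) := by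
    intro t v
    rw [traj_eq, hX0]
    simp only [hH]
    push_cast
    ring
  have hHzero : ∀ v : V, H 0 v = h0 v := by
    intro v; simp [hH, ccaNe_zero]
  have hHsucc : ∀ (t : ℕ) (v : V),
      H (t + 1) v = H t v + (if ccaExcited G X₀ t v then 1 else 0) := by
    intro t v
    simp only [hH, ccaNe_succ]
    split <;> push_cast <;> ring
  have hHmono : ∀ (t : ℕ) (v : V), H t v ≤ H (t + 1) v := by
    intro t v
    rw [hHsucc]
    split <;> omega
  -- excited iff characterization, given Lipschitz at time t
  have hchar : ∀ t : ℕ,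
      (∀ a b : V, G.Adj a b → H t b - H t a = -1 ∨ H t b - H t a = 0 ∨ H t b - H t a = 1) →
      ∀ v : V, (ccaExcited G X₀ t v ↔ ∃ u, G.Adj v u ∧ H t u = H t v + 1) := by
    intro t hlip v
    rw [excited_iff]
    apply exists_congr
    intro u
    constructor
    · rintro ⟨hu, hX⟩
      refine ⟨hu, ?_⟩
      have hd := hlip v u hu
      have hc : ccaTraj G X₀ t u - ccaTraj G X₀ t v = ((H t u - H t v : ℤ) : ZMod 3) := by
        rw [hHcast, hHcast]
        push_cast
        ring
      have hX' : ccaTraj G X₀ t u - ccaTraj G X₀ t v = 1 := by rw [hX]; ring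
      rcases hd with h1 | h1 | h1 <;> rw [h1] at hc
      · rw [hX'] at hc
        exact absurd hc.symm (by decide)
      · rw [hX'] at hc
        exact absurd hc.symm (by decide)
      · omega
    · rintro ⟨hu, hH1⟩
      refine ⟨hu, ?_⟩
      have hc : ccaTraj G X₀ t u - ccaTraj G X₀ t v = ((H t u - H t v : ℤ) : ZMod 3) := by
        rw [hHcast, hHcast]
        push_cast
        ring
      rw [hH1] at hc
      simp at hc
      rw [sub_eq_iff_eq_add] at hc
      rw [hc]
      ring
  -- Lipschitz for all times
  have key : ∀ t : ℕ, ∀ a b : V, G.Adj a b →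
      H t b - H t a = -1 ∨ H t b - H t a = 0 ∨ H t b - H t a = 1 := by
    intro t
    induction t with
    | zero =>
      intro a b hab
      rw [hHzero, hHzero]
      exact hedge3 a b hab
    | succ t ih =>
      have hexc := hchar t ih
      intro a b hab
      have hd := ih a b hab
      rw [hHsucc, hHsucc]
      by_cases ea : ccaExcited G X₀ t a <;> by_cases eb : ccaExcited G X₀ t b
      · rw [if_pos ea, if_pos eb]; omega
      · rw [if_pos ea, if_neg eb]
        have hnb : ¬ ∃ u, G.Adj b u ∧ H t u = H t b + 1 := fun hc => eb ((hexc b).mpr hc)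
        push_neg at hnb
        have := hnb a hab.symm
        omega
      · rw [if_neg ea, if_pos eb]
        have hna : ¬ ∃ u, G.Adj a u ∧ H t u = H t a + 1 := fun hc => ea ((hexc a).mpr hc)
        push_neg at hna
        have := hna b hab
        omega
      · rw [if_neg ea, if_neg eb]; omega
  have hexc : ∀ (t : ℕ) (v : V),
      ccaExcited G X₀ t v ↔ ∃ u, G.Adj v u ∧ H t u = H t v + 1 :=
    fun t => hchar t (key t)
  have hVne : (Finset.univ : Finset V).Nonempty := ⟨r, Finset.mem_univ r⟩
  set M : ℤ := Finset.univ.sup' hVne h0 with hM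
  have hub : ∀ (t : ℕ) (v : V), H t v ≤ M := by
    intro t
    induction t with
    | zero =>
      intro v
      rw [hHzero]
      exact Finset.le_sup' h0 (Finset.mem_univ v)
    | succ t ih =>
      intro v
      by_cases ev : ccaExcited G X₀ t v
      · obtain ⟨u, hu, hHu⟩ := (hexc t v).mp ev
        have := ih u
        rw [hHsucc, if_pos ev]
        omega
      · rw [hHsucc, if_neg ev]
        have := ih v
        omega
  have hlb : ∀ (t : ℕ) (u v : V), G.dist u v ≤ t → h0 u ≤ H t v := by
    intro t
    induction t with
    | zero =>
      intro u v h
      have huv : u = v := (hconn.dist_eq_zero_iff).mp (Nat.le_zero.mp h)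
      subst huv
      rw [hHzero]
    | succ t ih =>
      intro u v h
      rcases Nat.lt_or_ge t (G.dist u v) with hgt | hle
      · have hdist : G.dist u v = t + 1 := by omega
        obtain ⟨p, hplen⟩ := (hconn.preconnected u v).exists_walk_length_eq_dist
        have hpnotnil : ¬ p.reverse.Nil := by
          rw [Walk.nil_iff_length_eq, Walk.length_reverse, hplen, hdist]
          omega
        obtain ⟨z, hadj, q, hq⟩ := Walk.not_nil_iff.mp hpnotnil
        have hqlen : q.length = t := by
          have hl := congrArg Walk.length hq
          rw [Walk.length_reverse, Walk.length_cons, hplen, hdist] at hl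
          omega
        have hdz : G.dist u z ≤ t := by
          rw [SimpleGraph.dist_comm]
          exact hqlen ▸ SimpleGraph.dist_le q
        have hzu := ih u z hdz
        have hd3 := key t v z hadj
        by_cases hz1 : H t z = H t v + 1
        · have ev : ccaExcited G X₀ t v := (hexc t v).mpr ⟨z, hadj, hz1⟩
          rw [hHsucc, if_pos ev]
          omega
        · rw [hHsucc]
          split <;> omega
      · exact (ih u v hle).trans (hHmono t v)
  -- diameter bound
  have hnt : G.ediam ≠ ⊤ := by
    have hle : G.ediam ≤ (Finset.univ.sup (fun p : V × V => (G.edist p.1 p.2).toNat) : ℕ) := by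
      apply SimpleGraph.ediam_le_of_edist_le
      intro a b
      have hab : G.edist a b ≠ ⊤ := SimpleGraph.edist_ne_top_iff_reachable.mpr
        (hconn.preconnected a b)
      rw [← ENat.coe_toNat hab]
      exact_mod_cast Finset.le_sup (f := fun p : V × V => (G.edist p.1 p.2).toNat)
        (Finset.mem_univ (a, b))
    intro hcon
    rw [hcon] at hle
    exact (lt_irrefl ⊤ (lt_of_le_of_lt hle (ENat.coe_lt_top _)))
  intro t ht x y
  obtain ⟨u, _, hu⟩ := Finset.exists_mem_eq_sup' hVne h0
  have heq : ∀ v : V, H t v = M := by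
    intro v
    have h1 := hub t v
    have h2 : h0 u ≤ H t v := hlb t u v (le_trans (G.dist_le_diam hnt) ht)
    omega
  rw [hHcast, hHcast, heq x, heq y]
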